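/- For every integer a ≥ 1, the characteristic polynomial of the 3×3 integer matrix with rows (0,1,0), (0,0,1), (1,a,−2a−3) equals X³ + (2a+3)X² − aX − 1; it is irreducible over ℚ and has three distinct real roots. -/

import Mathlib

open Matrix Polynomial

/-- An integer polynomial has three distinct real roots. -/
def hasThreeDistinctRealRoots (p : Polynomial ℤ) : Prop :=
  ∃ x y z : ℝ, x ≠ y ∧ x ≠ z ∧ y ≠ z ∧
    (p.map (Int.castRingHom ℝ)).IsRoot x ∧
    (p.map (Int.castRingHom ℝ)).IsRoot y ∧
    (p.map (Int.castRingHom ℝ)).IsRoot z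

theorem charpoly_four_triangle_family (a : ℤ) (ha : 1 ≤ a) :
    (!![0, 1, 0; 0, 0, 1; 1, a, -2 * a - 3] : Matrix (Fin 3) (Fin 3) ℤ).charpoly
      = X ^ 3 + C (2 * a + 3) * X ^ 2 - C a * X - 1 ∧
    Irreducible
      (((!![0, 1, 0; 0, 0, 1; 1, a, -2 * a - 3] : Matrix (Fin 3) (Fin 3) ℤ).charpoly).map
        (Int.castRingHom ℚ)) ∧
    hasThreeDistinctRealRoots
      (!![0, 1, 0; 0, 0, 1; 1, a, -2 * a - 3] : Matrix (Fin 3) (Fin 3) ℤ).charpoly := by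
  have hp : (!![0, 1, 0; 0, 0, 1; 1, a, -2 * a - 3] : Matrix (Fin 3) (Fin 3) ℤ).charpoly
      = X ^ 3 + C (2 * a + 3) * X ^ 2 - C a * X - 1 := by
    rw [Matrix.charpoly, Matrix.det_fin_three]
    simp [charmatrix_apply, Matrix.one_apply]
    ring
  set p : Polynomial ℤ := X ^ 3 + C (2 * a + 3) * X ^ 2 - C a * X - 1 with hpdef
  have hmonic : p.Monic := hp ▸ Matrix.charpoly_monic _
  have hdeg : p.natDegree = 3 := by
    rw [← hp]; simp [Matrix.charpoly_natDegree_eq_dim]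
  have heval : ∀ n : ℤ, p.eval n = n ^ 3 + (2 * a + 3) * n ^ 2 - a * n - 1 := by
    intro n; simp [hpdef]
  -- irreducibility
  have hirr : Irreducible (p.map (Int.castRingHom ℚ)) := by
    have hdegq : (p.map (Int.castRingHom ℚ)).natDegree = 3 := by
      rw [Polynomial.natDegree_map_eq_of_injective (Int.cast_injective), hdeg]
    rw [Polynomial.irreducible_iff_roots_eq_zero_of_degree_le_three (by omega) (by omega)]
    by_contra hroots
    obtain ⟨r, hr⟩ := Multiset.exists_mem_of_ne_zero hroots
    have hmapne : p.map (Int.castRingHom ℚ) ≠ 0 := by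
      intro h; rw [h] at hdegq; simp at hdegq
    have hroot : (p.map (Int.castRingHom ℚ)).IsRoot r := (Polynomial.mem_roots hmapne).1 hr
    have haev : aeval r p = 0 := by
      rwa [aeval_def, ← Polynomial.eval_map]
    obtain ⟨n, hn, hdvd⟩ := exists_integer_of_is_root_of_monic hmonic haev
    have hc0 : p.coeff 0 = -1 := by simp [hpdef]
    rw [hc0] at hdvd
    have hn1 : n = 1 ∨ n = -1 := Int.isUnit_iff.1 (isUnit_of_dvd_unit hdvd (by norm_num))
    have hev0 : p.eval n = 0 := by
      have h1 : (algebraMap ℤ ℚ) (aeval n p) = 0 := by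
        rw [← aeval_algebraMap_apply, ← hn, haev]
      have h2 : aeval n p = p.eval n := by exact congrFun (Polynomial.coe_aeval_eq_eval n) p
      rw [h2] at h1
      have h3 : ((p.eval n : ℤ) : ℚ) = 0 := by simpa [algebraMap_int_eq] using h1
      exact_mod_cast h3
    rw [heval n] at hev0
    rcases hn1 with rfl | rfl <;> omega
  refine ⟨hp, hp ▸ hirr, ?_⟩
  -- three distinct real roots
  set f : ℝ → ℝ := fun x => x ^ 3 + (2 * a + 3) * x ^ 2 - a * x - 1 with hf
  have hroot_iff : ∀ x : ℝ, (p.map (Int.castRingHom ℝ)).IsRoot x ↔ f x = 0 := by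
    intro x
    simp [hpdef, Polynomial.IsRoot, hf]
  have hcont : ∀ s : Set ℝ, ContinuousOn f s := fun s =>
    (Continuous.continuousOn (by continuity))
  have har : (1 : ℝ) ≤ (a : ℝ) := by exact_mod_cast ha
  have hfm : f (-2 * a - 4) < 0 := by
    simp only [hf]; nlinarith [sq_nonneg ((a : ℝ) + 1)]
  have hfneg1 : 0 < f (-1) := by simp only [hf]; nlinarith
  have hf0 : f 0 < 0 := by simp [hf]
  have hf1 : 0 < f 1 := by simp only [hf]; nlinarith
  obtain ⟨x, hx, hfx⟩ := intermediate_value_Ioo (a := (-2 * (a:ℝ) - 4)) (b := -1)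
    (by nlinarith) (hcont _) ⟨hfm, hfneg1⟩
  obtain ⟨y, hy, hfy⟩ := intermediate_value_Ioo' (a := (-1 : ℝ)) (b := 0)
    (by norm_num) (hcont _) ⟨hf0, hfneg1⟩
  obtain ⟨z, hz, hfz⟩ := intermediate_value_Ioo (a := (0 : ℝ)) (b := 1)
    (by norm_num) (hcont _) ⟨hf0, hf1⟩
  refine ⟨x, y, z, ?_, ?_, ?_, ?_, ?_, ?_⟩
  · exact ne_of_lt (lt_trans hx.2 hy.1)
  · exact ne_of_lt (lt_trans hx.2 (lt_trans hy.1 (lt_trans hy.2 hz.1)))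
  · exact ne_of_lt (lt_trans hy.2 hz.1)
  · rw [hp, hroot_iff]; exact hfx
  · rw [hp, hroot_iff]; exact hfy
  · rw [hp, hroot_iff]; exact hfz
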